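/- (Proposition 1.) Under the ios-ORP assumption (ios₀ ⊆ ios₁), if π := μ(ios₀) > 0 then for every t ∈ [0,1] the FICE is bounded as L(t) ≤ FICE(t) ≤ U(t), where U(t) = min{1, μ(T1₁ ≤ t)/π} − μ(T1₀ ≤ t)/π and L(t) = max{0, 1 − μ(T1₁ > t)/π} − μ(T1₀ ≤ t)/π. -/

import Mathlib

open MeasureTheory Set

/-- Elementary conditional probability `μ(E|F) = μ(E ∩ F)/μ(F)`. -/
noncomputable def condProbR {Ω : Type*} [MeasurableSpace Ω] (μ : Measure Ω)
    (E F : Set Ω) : ℝ :=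
  (μ (E ∩ F)).toReal / (μ F).toReal

/-- Proposition 1: under ios-ORP (`ios₀ ⊆ ios₁`), with `π := μ(ios₀) > 0`, for every
`t ∈ [0,1]` the FICE is bounded by `L(t) ≤ FICE(t) ≤ U(t)`, where
`U(t) = min{1, μ(T1₁ ≤ t)/π} − μ(T1₀ ≤ t)/π` and
`L(t) = max{0, 1 − μ(T1₁ > t)/π} − μ(T1₀ ≤ t)/π`. -/
theorem FICE_bounds_ios_orp
    {Ω : Type*} [MeasurableSpace Ω] (μ : Measure Ω) [IsProbabilityMeasure μ]
    (T1₀ T2₀ T1₁ T2₁ : Ω → ℝ)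
    (hT1₀ : Measurable T1₀) (hT2₀ : Measurable T2₀)
    (hT1₁ : Measurable T1₁) (hT2₁ : Measurable T2₁)
    (hiosORP : ({ω | T1₀ ω ≤ 1} ∪ {ω | (1:ℝ) < T2₀ ω})
        ⊆ ({ω | T1₁ ω ≤ 1} ∪ {ω | (1:ℝ) < T2₁ ω}))
    (hpos : 0 < (μ ({ω | T1₀ ω ≤ 1} ∪ {ω | (1:ℝ) < T2₀ ω})).toReal)
    (t : ℝ) (ht0 : 0 ≤ t) (ht1 : t ≤ 1) :
    (max 0 (1 - (μ {ω | t < T1₁ ω}).toReal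
          / (μ ({ω | T1₀ ω ≤ 1} ∪ {ω | (1:ℝ) < T2₀ ω})).toReal)
        - (μ {ω | T1₀ ω ≤ t}).toReal
          / (μ ({ω | T1₀ ω ≤ 1} ∪ {ω | (1:ℝ) < T2₀ ω})).toReal
      ≤ condProbR μ {ω | T1₁ ω ≤ t}
          (({ω | T1₀ ω ≤ 1} ∪ {ω | (1:ℝ) < T2₀ ω})
            ∩ ({ω | T1₁ ω ≤ 1} ∪ {ω | (1:ℝ) < T2₁ ω}))
        - condProbR μ {ω | T1₀ ω ≤ t}
          (({ω | T1₀ ω ≤ 1} ∪ {ω | (1:ℝ) < T2₀ ω})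
            ∩ ({ω | T1₁ ω ≤ 1} ∪ {ω | (1:ℝ) < T2₁ ω}))) ∧
    (condProbR μ {ω | T1₁ ω ≤ t}
          (({ω | T1₀ ω ≤ 1} ∪ {ω | (1:ℝ) < T2₀ ω})
            ∩ ({ω | T1₁ ω ≤ 1} ∪ {ω | (1:ℝ) < T2₁ ω}))
        - condProbR μ {ω | T1₀ ω ≤ t}
          (({ω | T1₀ ω ≤ 1} ∪ {ω | (1:ℝ) < T2₀ ω})
            ∩ ({ω | T1₁ ω ≤ 1} ∪ {ω | (1:ℝ) < T2₁ ω}))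
      ≤ min 1 ((μ {ω | T1₁ ω ≤ t}).toReal
          / (μ ({ω | T1₀ ω ≤ 1} ∪ {ω | (1:ℝ) < T2₀ ω})).toReal)
        - (μ {ω | T1₀ ω ≤ t}).toReal
          / (μ ({ω | T1₀ ω ≤ 1} ∪ {ω | (1:ℝ) < T2₀ ω})).toReal) := by
  set A : Set Ω := {ω | T1₀ ω ≤ 1} ∪ {ω | (1:ℝ) < T2₀ ω} with hA
  set B : Set Ω := {ω | T1₁ ω ≤ 1} ∪ {ω | (1:ℝ) < T2₁ ω} with hB
  have hAB : A ∩ B = A := Set.inter_eq_left.mpr hiosORP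
  have hfin : ∀ S : Set Ω, μ S ≠ ⊤ := fun S => (measure_lt_top μ S).ne
  set πR : ℝ := (μ A).toReal with hπ
  -- second term equals μ(T1₀ ≤ t)/π
  have hsub0 : {ω | T1₀ ω ≤ t} ⊆ A := fun ω hω => Or.inl (le_trans hω ht1)
  have h0 : {ω | T1₀ ω ≤ t} ∩ A = {ω | T1₀ ω ≤ t} := Set.inter_eq_left.mpr hsub0
  have hcond0 : condProbR μ {ω | T1₀ ω ≤ t} (A ∩ B)
      = (μ {ω | T1₀ ω ≤ t}).toReal / πR := by
    rw [condProbR, hAB, h0]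
  have hcond1 : condProbR μ {ω | T1₁ ω ≤ t} (A ∩ B)
      = (μ ({ω | T1₁ ω ≤ t} ∩ A)).toReal / πR := by
    rw [condProbR, hAB]
  set x : ℝ := (μ ({ω | T1₁ ω ≤ t} ∩ A)).toReal with hx
  have hxle : x ≤ πR := ENNReal.toReal_mono (hfin A) (measure_mono Set.inter_subset_right)
  have hxler : x ≤ (μ {ω | T1₁ ω ≤ t}).toReal :=
    ENNReal.toReal_mono (hfin _) (measure_mono Set.inter_subset_left)
  have hx0 : 0 ≤ x := ENNReal.toReal_nonneg
  have hlow : πR ≤ x + (μ {ω | t < T1₁ ω}).toReal := by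
    have hss : A ⊆ ({ω | T1₁ ω ≤ t} ∩ A) ∪ {ω | t < T1₁ ω} := by
      intro ω hω
      rcases le_or_gt (T1₁ ω) t with h | h
      · exact Or.inl ⟨h, hω⟩
      · exact Or.inr h
    calc πR ≤ (μ (({ω | T1₁ ω ≤ t} ∩ A) ∪ {ω | t < T1₁ ω})).toReal :=
          ENNReal.toReal_mono (hfin _) (measure_mono hss)
      _ ≤ (μ ({ω | T1₁ ω ≤ t} ∩ A) + μ {ω | t < T1₁ ω}).toReal :=
          ENNReal.toReal_mono (by simp [ENNReal.add_ne_top, hfin]) (measure_union_le _ _)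
      _ = x + (μ {ω | t < T1₁ ω}).toReal := ENNReal.toReal_add (hfin _) (hfin _)
  rw [hcond0, hcond1]
  have hπpos : 0 < πR := hpos
  constructor
  · have : max 0 (1 - (μ {ω | t < T1₁ ω}).toReal / πR) ≤ x / πR := by
      apply max_le
      · positivity
      · rw [sub_le_iff_le_add, ← add_div, le_div_iff₀ hπpos, one_mul]
        linarith
    linarith
  · have : x / πR ≤ min 1 ((μ {ω | T1₁ ω ≤ t}).toReal / πR) := by
      apply le_min
      · rw [div_le_one hπpos]; exact hxle
      · gcongr
    linarith
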